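/- Let d ≥ 2, p, q ∈ [0,1], and γ ≥ 1. For the isotropic states ζ^q and ζ^p on ℂ^d ⊗ ℂ^d, the hockey-stick divergence satisfies E_γ(ζ^q‖ζ^p) = max{0, q − γp, (1−q) − γ(1−p)}. -/

import Mathlib

noncomputable section
open Matrix ComplexOrder

/-- Bipartite complex matrices on ℂ^d ⊗ ℂ^d. -/
abbrev BMat (d : ℕ) := Matrix (Fin d × Fin d) (Fin d × Fin d) ℂ

/-- The maximally entangled state `Φ = (1/d) Σ_{i,j} |i⟩⟨j| ⊗ |i⟩⟨j|`. -/
def maxEnt (d : ℕ) : BMat d :=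
  fun p q => if p.1 = p.2 ∧ q.1 = q.2 then ((d : ℂ))⁻¹ else 0

section helpers
variable {n : Type*} [Fintype n] [DecidableEq n]

lemma psd_diag_nonneg {A : Matrix n n ℂ} (hA : A.PosSemidef) (i : n) : 0 ≤ A i i := by
  exact hA.diag_nonneg

lemma psd_trace_nonneg {A : Matrix n n ℂ} (hA : A.PosSemidef) : 0 ≤ A.trace :=
  Finset.sum_nonneg fun i _ => psd_diag_nonneg hA i

open scoped MatrixOrder in
lemma psd_trace_mul_nonneg {A B : Matrix n n ℂ} (hA : A.PosSemidef) (hB : B.PosSemidef) :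
    0 ≤ (A * B).trace := by
  have h1 : A * B = A * (CFC.sqrt B * CFC.sqrt B) := by rw [CFC.sqrt_mul_sqrt_self B hB.nonneg]
  have h2 : (CFC.sqrt B * A * CFC.sqrt B).trace = (A * (CFC.sqrt B * CFC.sqrt B)).trace :=
    by rw [Matrix.trace_mul_cycle, Matrix.trace_mul_comm]
  have h3 : (CFC.sqrt B * A * CFC.sqrt B).PosSemidef := by
    simpa [(CFC.sqrt_nonneg B).posSemidef.1.eq] using hA.conjTranspose_mul_mul_same (CFC.sqrt B)
  rw [h1, ← h2]
  exact psd_trace_nonneg h3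

end helpers

section ent
variable {d : ℕ} (hd : 2 ≤ d)
include hd

lemma hdc0 : (d : ℂ) ≠ 0 := by
  have : d ≠ 0 := by omega
  exact_mod_cast this

omit hd in
lemma maxEnt_herm : (maxEnt d)ᴴ = maxEnt d := by
  ext p q
  simp only [Matrix.conjTranspose_apply, maxEnt]
  split_ifs with h1 h2 h2 <;> simp_all [and_comm, eq_comm, Complex.conj_inv]

omit hd in
lemma sum_diag_ite (c : ℂ) : (∑ r : Fin d × Fin d, if r.1 = r.2 then c else 0) = d * c := by
  rw [Fintype.sum_prod_type]
  simp [Finset.sum_ite_eq]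

lemma maxEnt_mul_self : maxEnt d * maxEnt d = maxEnt d := by
  have hd0 := hdc0 hd
  ext p q
  simp only [Matrix.mul_apply, maxEnt]
  by_cases h : p.1 = p.2 ∧ q.1 = q.2
  · have key : ∀ r : Fin d × Fin d,
        (if p.1 = p.2 ∧ r.1 = r.2 then ((d:ℂ))⁻¹ else 0) *
        (if r.1 = r.2 ∧ q.1 = q.2 then ((d:ℂ))⁻¹ else 0) =
        if r.1 = r.2 then ((d:ℂ))⁻¹ * ((d:ℂ))⁻¹ else 0 := fun r => by
      by_cases hr : r.1 = r.2 <;> simp [hr, h.1, h.2]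
    rw [Finset.sum_congr rfl fun r _ => key r, sum_diag_ite, if_pos h,
      ← mul_assoc, mul_inv_cancel₀ hd0, one_mul]
  · rw [if_neg h]
    refine Finset.sum_eq_zero fun r _ => ?_
    rcases not_and_or.mp h with h' | h' <;> simp [h']

lemma maxEnt_trace : (maxEnt d).trace = 1 := by
  have hd0 := hdc0 hd
  rw [Matrix.trace]
  have key : ∀ r : Fin d × Fin d,
      (Matrix.diag (maxEnt d)) r = if r.1 = r.2 then ((d:ℂ))⁻¹ else 0 := by
    intro r; simp [Matrix.diag, maxEnt]
  rw [Finset.sum_congr rfl fun r _ => key r, sum_diag_ite, mul_inv_cancel₀ hd0]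

lemma maxEnt_psd : (maxEnt d).PosSemidef := by
  have := Matrix.posSemidef_conjTranspose_mul_self (maxEnt d)
  rwa [maxEnt_herm, maxEnt_mul_self hd] at this

lemma one_sub_maxEnt_psd : ((1 : BMat d) - maxEnt d).PosSemidef := by
  have hsq : ((1 : BMat d) - maxEnt d) * ((1 : BMat d) - maxEnt d) = 1 - maxEnt d := by
    simp only [sub_mul, mul_sub, one_mul, mul_one, maxEnt_mul_self hd]
    abel
  have hherm : ((1 : BMat d) - maxEnt d)ᴴ = (1 : BMat d) - maxEnt d := by
    rw [Matrix.conjTranspose_sub, Matrix.conjTranspose_one, maxEnt_herm]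
  have := Matrix.posSemidef_conjTranspose_mul_self ((1 : BMat d) - maxEnt d)
  rwa [hherm, hsq] at this

end ent


/-- The orthogonal complement state `Φ⊥ = (I − Φ)/(d² − 1)`. -/
def maxEntPerp (d : ℕ) : BMat d := (((d : ℂ) ^ 2 - 1))⁻¹ • (1 - maxEnt d)

/-- The isotropic state `ζ^p = pΦ + (1−p)Φ⊥`. -/
def iso (d : ℕ) (p : ℝ) : BMat d := (p : ℂ) • maxEnt d + ((1 - p : ℝ) : ℂ) • maxEntPerp d

/-- Hockey-stick divergence (all measurements) for γ ≥ 1. -/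
def Eg {d : ℕ} (γ : ℝ) (ρ σ : BMat d) : ℝ :=
  sSup {x : ℝ | ∃ M : BMat d, M.PosSemidef ∧ ((1 : BMat d) - M).PosSemidef ∧
    x = ((M * (ρ - (γ : ℂ) • σ)).trace).re}

lemma delta_decomp (d : ℕ) (p q γ : ℝ) :
    iso d q - (γ:ℂ) • iso d p =
      ((q:ℂ) - (γ:ℂ) * (p:ℂ)) • maxEnt d +
      ((((1-q:ℝ):ℂ) - (γ:ℂ) * ((1-p:ℝ):ℂ)) * (((d:ℂ))^2 - 1)⁻¹) • ((1:BMat d) - maxEnt d) := by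
  unfold iso maxEntPerp
  module

lemma complex_eq_re {z : ℂ} (h : 0 ≤ z) : z = ((z.re : ℝ) : ℂ) :=
  Complex.ext rfl (by simp [(Complex.nonneg_iff.mp h).2.symm])

lemma real_bound {a b t s : ℝ} (ht0 : 0 ≤ t) (ht1 : t ≤ 1) (hs0 : 0 ≤ s) (hs1 : s ≤ 1)
    (hab : a + b ≤ 0) : a * t + b * s ≤ max 0 (max a b) := by
  rcases le_or_gt a 0 with ha | ha
  · rcases le_or_gt b 0 with hb | hb
    · exact le_trans (by nlinarith) (le_max_left _ _)
    · exact le_trans (by nlinarith) ((le_max_right a b).trans (le_max_right _ _))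
  · have hb : b ≤ 0 := by linarith
    exact le_trans (by nlinarith) ((le_max_left a b).trans (le_max_right _ _))

/-- Hockey-stick divergence for isotropic states. -/
theorem stmt_12 (d : ℕ) (hd : 2 ≤ d) (p q : ℝ)
    (hp : p ∈ Set.Icc (0 : ℝ) 1) (hq : q ∈ Set.Icc (0 : ℝ) 1)
    (γ : ℝ) (hγ : 1 ≤ γ) :
    Eg γ (iso d q) (iso d p) =
      max 0 (max (q - γ * p) ((1 - q) - γ * (1 - p))) := by
  have hd2 : (2:ℝ) ≤ (d:ℝ) := by exact_mod_cast hd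
  have hD : (0:ℝ) < (d:ℝ)^2 - 1 := by nlinarith
  have hDne : ((d:ℝ)^2 - 1) ≠ 0 := ne_of_gt hD
  have hDC : (((d:ℂ))^2 - 1) = ((((d:ℝ)^2 - 1 : ℝ)) : ℂ) := by push_cast; ring
  have hDCne : (((d:ℂ))^2 - 1) ≠ 0 := by
    rw [hDC]; exact_mod_cast hDne
  set a : ℝ := q - γ * p with ha_def
  set b : ℝ := (1 - q) - γ * (1 - p) with hb_def
  -- trace of 1 - maxEnt d
  have htr1 : ((1:BMat d) - maxEnt d).trace = ((((d:ℝ)^2 - 1 : ℝ)) : ℂ) := by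
    rw [Matrix.trace_sub, Matrix.trace_one, maxEnt_trace hd]
    simp [Fintype.card_prod]
    push_cast; ring
  -- key trace formula
  have key : ∀ M : BMat d, ((M * (iso d q - (γ:ℂ) • iso d p)).trace) =
      ((a:ℝ):ℂ) * (M * maxEnt d).trace
        + (((b / ((d:ℝ)^2 - 1) : ℝ)):ℂ) * (M * ((1:BMat d) - maxEnt d)).trace := by
    intro M
    rw [delta_decomp, mul_add, Matrix.mul_smul, Matrix.mul_smul, Matrix.trace_add,
      Matrix.trace_smul, Matrix.trace_smul, smul_eq_mul, smul_eq_mul]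
    congr 2
    · rw [ha_def]; push_cast; ring
    · rw [hb_def, hDC]; push_cast; ring
  set S : Set ℝ := {x : ℝ | ∃ M : BMat d, M.PosSemidef ∧ ((1 : BMat d) - M).PosSemidef ∧
    x = ((M * (iso d q - (γ : ℂ) • iso d p)).trace).re} with hS_def
  have h0S : (0:ℝ) ∈ S := by
    refine ⟨0, Matrix.PosSemidef.zero, by simpa using (Matrix.PosSemidef.one (n := Fin d × Fin d) (R := ℂ)), ?_⟩
    simp
  have haS : a ∈ S := by
    refine ⟨maxEnt d, maxEnt_psd hd, one_sub_maxEnt_psd hd, ?_⟩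
    rw [key]
    have h1 : (maxEnt d * maxEnt d).trace = 1 := by rw [maxEnt_mul_self hd, maxEnt_trace hd]
    have h2 : maxEnt d * ((1:BMat d) - maxEnt d) = 0 := by
      rw [mul_sub, mul_one, maxEnt_mul_self hd, sub_self]
    rw [h1, h2, Matrix.trace_zero]
    simp
  have hbS : b ∈ S := by
    refine ⟨(1:BMat d) - maxEnt d, one_sub_maxEnt_psd hd, by
      simpa [sub_sub_cancel] using maxEnt_psd hd, ?_⟩
    rw [key]
    have h1 : ((1:BMat d) - maxEnt d) * maxEnt d = 0 := by
      rw [sub_mul, one_mul, maxEnt_mul_self hd, sub_self]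
    have h2 : ((1:BMat d) - maxEnt d) * ((1:BMat d) - maxEnt d) = (1:BMat d) - maxEnt d := by
      simp only [sub_mul, mul_sub, one_mul, mul_one, maxEnt_mul_self hd]
      abel
    rw [h1, h2, Matrix.trace_zero, htr1]
    rw [mul_zero, zero_add, ← Complex.ofReal_mul]
    rw [div_mul_cancel₀ _ hDne]
    simp
  have hub : ∀ x ∈ S, x ≤ max 0 (max a b) := by
    rintro x ⟨M, hM, hM1, rfl⟩
    have hΦ := maxEnt_psd hd
    have hΦ' := one_sub_maxEnt_psd hd
    have ht0 : 0 ≤ ((M * maxEnt d).trace).re :=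
      (Complex.nonneg_iff.mp (psd_trace_mul_nonneg hM hΦ)).1
    have hs0 : 0 ≤ ((M * ((1:BMat d) - maxEnt d)).trace).re :=
      (Complex.nonneg_iff.mp (psd_trace_mul_nonneg hM hΦ')).1
    have ht1 : ((M * maxEnt d).trace).re ≤ 1 := by
      have h := (Complex.nonneg_iff.mp (psd_trace_mul_nonneg hM1 hΦ)).1
      have hexp : (((1:BMat d) - M) * maxEnt d).trace = 1 - (M * maxEnt d).trace := by
        rw [sub_mul, one_mul, Matrix.trace_sub, maxEnt_trace hd]
      rw [hexp] at h
      simpa using h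
    have hs1 : ((M * ((1:BMat d) - maxEnt d)).trace).re ≤ (d:ℝ)^2 - 1 := by
      have h := (Complex.nonneg_iff.mp (psd_trace_mul_nonneg hM1 hΦ')).1
      have hexp : (((1:BMat d) - M) * ((1:BMat d) - maxEnt d)).trace =
          ((((d:ℝ)^2 - 1 : ℝ)) : ℂ) - (M * ((1:BMat d) - maxEnt d)).trace := by
        rw [sub_mul, one_mul, Matrix.trace_sub, htr1]
      rw [hexp, Complex.sub_re, Complex.ofReal_re] at h
      linarith
    rw [key]
    simp only [Complex.add_re, Complex.re_ofReal_mul]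
    have := real_bound (a := a) (b := b)
      (t := ((M * maxEnt d).trace).re)
      (s := ((M * ((1:BMat d) - maxEnt d)).trace).re / ((d:ℝ)^2 - 1))
      ht0 ht1 (by positivity) (by rw [div_le_one hD]; exact hs1)
      (by rw [ha_def, hb_def]; linarith)
    calc a * ((M * maxEnt d).trace).re
          + b / ((d:ℝ)^2 - 1) * ((M * ((1:BMat d) - maxEnt d)).trace).re
        = a * ((M * maxEnt d).trace).re
          + b * (((M * ((1:BMat d) - maxEnt d)).trace).re / ((d:ℝ)^2 - 1)) := by ring
      _ ≤ max 0 (max a b) := this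
  have hne : S.Nonempty := ⟨0, h0S⟩
  have hbdd : BddAbove S := ⟨max 0 (max a b), fun x hx => hub x hx⟩
  show sSup S = max 0 (max a b)
  refine le_antisymm (csSup_le hne hub) ?_
  exact max_le (le_csSup hbdd h0S) (max_le (le_csSup hbdd haS) (le_csSup hbdd hbS))
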